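/- For every integer n ≥ 1 and every z ∈ ℂ, the determinant of the n × n matrix whose (i, j) entry is z^{2i−j}/(2i−j)! (with the convention that this entry is 0 when 2i − j < 0) equals z^{n(n+1)/2} / κ_n, where κ_n = ∏_{j=1}^{n} (2j−1)!!. -/

import Mathlib

open Finset Polynomial

private lemma det_vandermonde_id' (n : ℕ) :
    (Matrix.vandermonde (fun i : Fin n => ((i : ℕ) : ℂ))).det
      = ∏ i ∈ Finset.range n, (i.factorial : ℂ) := by
  cases n with
  | zero => simp
  | succ m =>
    have h := Matrix.det_vandermonde_id_eq_superFactorial (R := ℂ) m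
    rw [show (fun i : Fin (m+1) => ((i : ℕ) : ℂ)) = (fun i : Fin (m+1) => (i : ℂ)) from rfl, h]
    rw [← Nat.prod_range_succ_factorial m]
    push_cast
    rfl

private lemma vand' (n : ℕ) :
    (Matrix.vandermonde (fun i : Fin n => (2 * (i : ℕ) + 1 : ℂ))).det
      = ∏ i ∈ Finset.range n, ((2 ^ i * i.factorial : ℕ) : ℂ) := by
  rw [show (fun i : Fin n => (2 * (i : ℕ) + 1 : ℂ))
      = (fun i : Fin n => (2 * (i : ℕ) : ℂ) + 1) from rfl, Matrix.det_vandermonde_add]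
  have h2 : Matrix.vandermonde (fun i : Fin n => (2 * (i : ℕ) : ℂ))
      = Matrix.of fun i j : Fin n =>
          (2 : ℂ) ^ (j : ℕ) * (Matrix.vandermonde (fun i : Fin n => ((i : ℕ) : ℂ))) i j := by
    ext i j
    simp [Matrix.vandermonde, mul_pow]
  rw [h2, Matrix.det_mul_row, det_vandermonde_id']
  rw [Fin.prod_univ_eq_prod_range (fun j => (2 : ℂ) ^ j) n, ← Finset.prod_mul_distrib]
  push_cast
  rfl

/-- `κ_n = ∏_{j=1}^{n} (2j−1)‼`. -/
def kappa (n : ℕ) : ℕ := ∏ j ∈ Finset.range n, Nat.doubleFactorial (2 * j + 1)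

private lemma odd_fact (i : ℕ) :
    (2 * i + 1).factorial
      = Nat.doubleFactorial (2 * i + 1) * (2 ^ i * i.factorial) := by
  rw [Nat.factorial_eq_mul_doubleFactorial (2 * i), Nat.doubleFactorial_two_mul]

private lemma prod_odd_fact (n : ℕ) :
    ∏ i ∈ Finset.range n, (2 * i + 1).factorial
      = kappa n * ∏ i ∈ Finset.range n, (2 ^ i * i.factorial) := by
  rw [kappa, ← Finset.prod_mul_distrib]
  exact Finset.prod_congr rfl fun i _ => odd_fact i

/-- The determinant of the `n × n` matrix with (1-indexed)
`(i,j)` entry `z^{2i−j}/(2i−j)!` (entry `0` when `2i−j < 0`) equals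
`z^{n(n+1)/2}/κ_n`.  Here rows and columns are 0-indexed, so the entry is
`z^{2i+1−j}/(2i+1−j)!`. -/
theorem det_schur_triangle (n : ℕ) (hn : 1 ≤ n) (z : ℂ) :
    Matrix.det (Matrix.of fun i j : Fin n =>
        if (j : ℕ) ≤ 2 * (i : ℕ) + 1 then
          z ^ (2 * (i : ℕ) + 1 - (j : ℕ)) / ((2 * (i : ℕ) + 1 - (j : ℕ)).factorial : ℂ)
        else 0)
      = z ^ (n * (n + 1) / 2) / (kappa n : ℂ) := by
  have h1 : n * (n + 1) = n * n + n := by ring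
  have h2 : n * (n - 1) + n = n * n := by
    cases n with
    | zero => simp
    | succ m => simp only [Nat.succ_sub_one]; ring
  have he1 : n * (n + 1) % 2 = 0 := Nat.even_iff.mp (Nat.even_mul_succ_self n)
  have he2 : n * (n - 1) % 2 = 0 := by
    have h := Nat.even_mul_succ_self (n - 1)
    rw [Nat.sub_add_cancel hn] at h
    rw [mul_comm]
    exact Nat.even_iff.mp h
  have hexp : n * (n + 1) / 2 + n * (n - 1) / 2 = n * n := by omega
  rcases eq_or_ne z 0 with rfl | hz
  · -- z = 0 : the last row is zero
    rw [Matrix.det_eq_zero_of_row_eq_zero ⟨n - 1, by omega⟩ ?_]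
    · have hne : n * (n + 1) / 2 ≠ 0 := by
        have hpos : 1 ≤ n * n := Nat.one_le_iff_ne_zero.mpr (by positivity)
        omega
      rw [zero_pow hne, zero_div]
    · intro j
      have hj2 : (j : ℕ) < n := j.isLt
      have hj : (j : ℕ) ≤ 2 * (n - 1) + 1 := by omega
      have hpos : 2 * (n - 1) + 1 - (j : ℕ) ≠ 0 := by omega
      simp only [Matrix.of_apply]
      rw [if_pos hj, zero_pow hpos, zero_div]
  · -- z ≠ 0
    have hstep : (Matrix.of fun i j : Fin n =>
        if (j : ℕ) ≤ 2 * (i : ℕ) + 1 then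
          z ^ (2 * (i : ℕ) + 1 - (j : ℕ)) / ((2 * (i : ℕ) + 1 - (j : ℕ)).factorial : ℂ)
        else 0)
        = Matrix.of fun i j : Fin n =>
            (z ^ (2 * (i : ℕ) + 1) / (((2 * (i : ℕ) + 1).factorial : ℕ) : ℂ)) *
            (Matrix.of (fun i j : Fin n => (z⁻¹ ^ (j : ℕ)) *
              (Matrix.of fun i j : Fin n =>
                ((descPochhammer ℂ (j : ℕ)).eval (((2 * (i : ℕ) + 1 : ℕ)) : ℂ))) i j) i j) := by
      ext i j
      simp only [Matrix.of_apply, descPochhammer_eval_eq_descFactorial]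
      by_cases h : (j : ℕ) ≤ 2 * (i : ℕ) + 1
      · rw [if_pos h]
        have hfac : ((2 * (i : ℕ) + 1 - (j : ℕ)).factorial : ℂ)
            * (((2 * (i : ℕ) + 1).descFactorial (j : ℕ) : ℕ) : ℂ)
            = (((2 * (i : ℕ) + 1).factorial : ℕ) : ℂ) := by
          exact_mod_cast congrArg (Nat.cast (R := ℂ)) (Nat.factorial_mul_descFactorial h)
        have hf1 : ((2 * (i : ℕ) + 1 - (j : ℕ)).factorial : ℂ) ≠ 0 := by
          exact_mod_cast Nat.factorial_ne_zero _
        have hf2 : (((2 * (i : ℕ) + 1).factorial : ℕ) : ℂ) ≠ 0 := by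
          exact_mod_cast Nat.factorial_ne_zero _
        rw [pow_sub₀ z hz h]
        field_simp
        have hzj : z ^ (j : ℕ) * (1 / z) ^ (j : ℕ) = 1 := by rw [← mul_pow, mul_one_div_cancel hz, one_pow]
        linear_combination -hfac - (((2 * (i : ℕ) + 1 - (j : ℕ)).factorial : ℂ) * (((2 * (i : ℕ) + 1).descFactorial (j : ℕ) : ℕ) : ℂ)) * hzj
      · rw [if_neg h]
        rw [Nat.descFactorial_eq_zero_iff_lt.mpr (by omega)]
        simp
    rw [hstep, Matrix.det_mul_column, Matrix.det_mul_row,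
      ← Matrix.det_eval_matrixOfPolynomials_eq_det_vandermonde
        (fun i : Fin n => (((2 * (i : ℕ) + 1 : ℕ)) : ℂ)) (fun j : Fin n => descPochhammer ℂ (j : ℕ))
        (fun j => descPochhammer_natDegree ℂ (j : ℕ))
        (fun j => monic_descPochhammer ℂ (j : ℕ))]
    have hv : (Matrix.vandermonde fun i : Fin n => (((2 * (i : ℕ) + 1 : ℕ)) : ℂ)).det
        = ∏ i ∈ Finset.range n, ((2 ^ i * i.factorial : ℕ) : ℂ) := by
      rw [← vand' n]
      congr 1
      funext i
      push_cast
      ring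
    rw [hv, Finset.prod_div_distrib]
    have hzpow : (∏ i : Fin n, z ^ (2 * (i : ℕ) + 1)) = z ^ (n * n) := by
      rw [Finset.prod_pow_eq_pow_sum]
      congr 1
      rw [Fin.sum_univ_eq_sum_range (fun i => 2 * i + 1) n, Finset.sum_add_distrib,
        ← Finset.mul_sum, Finset.sum_range_id, Finset.sum_const, Finset.card_range,
        smul_eq_mul, mul_one]
      omega
    have hzinv : (∏ j : Fin n, z⁻¹ ^ (j : ℕ)) = (z ^ (n * (n - 1) / 2))⁻¹ := by
      rw [Finset.prod_pow_eq_pow_sum, inv_pow]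
      congr 2
      rw [Fin.sum_univ_eq_sum_range (fun i => i) n, Finset.sum_range_id]
    have hfactprod : (∏ i : Fin n, (((2 * (i : ℕ) + 1).factorial : ℕ) : ℂ))
        = (kappa n : ℂ) * ∏ i ∈ Finset.range n, ((2 ^ i * i.factorial : ℕ) : ℂ) := by
      rw [Fin.prod_univ_eq_prod_range (fun i => (((2 * i + 1).factorial : ℕ) : ℂ)) n,
        ← Nat.cast_prod, prod_odd_fact, Nat.cast_mul, Nat.cast_prod]
    rw [hzpow, hzinv, hfactprod]
    have hP : (∏ i ∈ Finset.range n, ((2 ^ i * i.factorial : ℕ) : ℂ)) ≠ 0 := by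
      rw [← Nat.cast_prod]
      exact_mod_cast (Finset.prod_pos fun i _ => by positivity).ne'
    have hk : (kappa n : ℂ) ≠ 0 := by
      exact_mod_cast (Finset.prod_pos fun i _ => Nat.doubleFactorial_pos _).ne'
    have hzn : z ^ (n * (n - 1) / 2) ≠ 0 := pow_ne_zero _ hz
    have hsplit : z ^ (n * n) = z ^ (n * (n + 1) / 2) * z ^ (n * (n - 1) / 2) := by
      rw [← pow_add, hexp]
    rw [hsplit]
    have hgen : ∀ (P K T A : ℂ), K ≠ 0 → P ≠ 0 → T ≠ 0 →
        A * T / (K * P) * (T⁻¹ * P) = A / K := by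
      intro P K T A hK hPn hT
      field_simp
    exact hgen _ _ _ _ hk hP hzn
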